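/- Let V be a finite-dimensional vector space over ℚ with complexification V_ℂ = ℂ ⊗_ℚ V, and let W ⊆ V_ℂ be a ℂ-linear subspace. Let L(W) denote the smallest ℚ-subspace of V containing L(w) for every w ∈ W. Then the set {w ∈ W : L(w) ≠ L(W)} is contained in the union of a countable family of proper ℂ-subspaces of W; in particular there exists w ∈ W with L(w) = L(W). -/

import Mathlib

open TensorProduct

/-- The rational envelope `L(w)` of an element `w` of the complexification
`V_ℂ = ℂ ⊗[ℚ] V`: the smallest `ℚ`-subspace `L ⊆ V` with `w ∈ L_ℂ`. -/
noncomputable def rationalEnvelope (V : Type*) [AddCommGroup V] [Module ℚ V]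
    (w : ℂ ⊗[ℚ] V) : Submodule ℚ V :=
  sInf {L : Submodule ℚ V | w ∈ L.baseChange ℂ}

/-- The rational envelope `L(W)` of a subset `W` of the complexification: the smallest
`ℚ`-subspace of `V` containing `L(w)` for all `w ∈ W`. -/
noncomputable def rationalEnvelopeSet (V : Type*) [AddCommGroup V] [Module ℚ V]
    (W : Set (ℂ ⊗[ℚ] V)) : Submodule ℚ V :=
  ⨆ w ∈ W, rationalEnvelope V w

section Aux

variable {V : Type*} [AddCommGroup V] [Module ℚ V] {κ : Type*}

/-- The `j`-th rational coordinate map `ℂ ⊗[ℚ] V →ₗ[ℚ] V` attached to a `ℚ`-basis of `ℂ`. -/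
noncomputable def coordMapAux (c : Module.Basis κ ℚ ℂ) (j : κ) : ℂ ⊗[ℚ] V →ₗ[ℚ] V :=
  TensorProduct.lift ((LinearMap.lsmul ℚ V).comp (c.coord j))

@[simp] lemma coordMapAux_tmul (c : Module.Basis κ ℚ ℂ) (j : κ) (a : ℂ) (v : V) :
    coordMapAux c j (a ⊗ₜ[ℚ] v) = c.repr a j • v := by
  simp [coordMapAux, Module.Basis.coord_apply]

/-- Decomposition of `ℂ ⊗[ℚ] V` along a `ℚ`-basis of `ℂ`. -/
noncomputable def decompAux [DecidableEq κ] (c : Module.Basis κ ℚ ℂ) : ℂ ⊗[ℚ] V ≃ₗ[ℚ] (κ →₀ V) :=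
  (TensorProduct.congr c.repr (LinearEquiv.refl ℚ V)).trans
    (TensorProduct.finsuppScalarLeft ℚ V κ)

lemma decompAux_apply [DecidableEq κ] (c : Module.Basis κ ℚ ℂ) (w : ℂ ⊗[ℚ] V) (j : κ) :
    decompAux c w j = coordMapAux c j w := by
  have h : (Finsupp.lapply j ∘ₗ (decompAux (V := V) c).toLinearMap) = coordMapAux c j := by
    apply TensorProduct.ext'
    intro a v
    simp [decompAux, coordMapAux, Module.Basis.coord_apply]
  exact LinearMap.congr_fun h w

lemma decompAux_symm_single [DecidableEq κ] (c : Module.Basis κ ℚ ℂ) (j : κ) (v : V) :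
    (decompAux c).symm (Finsupp.single j v) = (c j) ⊗ₜ[ℚ] v := by
  simp [decompAux, LinearEquiv.trans_symm]

lemma mem_baseChange_iff_aux [DecidableEq κ] (c : Module.Basis κ ℚ ℂ) {L : Submodule ℚ V}
    {w : ℂ ⊗[ℚ] V} :
    w ∈ L.baseChange ℂ ↔ ∀ j, coordMapAux c j w ∈ L := by
  constructor
  · intro hw
    set T : Submodule ℚ (ℂ ⊗[ℚ] V) :=
      Submodule.span ℚ {x | ∃ (z : ℂ) (v : V), v ∈ L ∧ z ⊗ₜ[ℚ] v = x} with hT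
    let T' : Submodule ℂ (ℂ ⊗[ℚ] V) :=
      { carrier := (T : Set (ℂ ⊗[ℚ] V))
        add_mem' := fun ha hb => T.add_mem ha hb
        zero_mem' := T.zero_mem
        smul_mem' := by
          intro z x hx
          refine Submodule.span_induction (p := fun x _ => z • x ∈ T) ?_ ?_ ?_ ?_ hx
          · rintro x ⟨z', v, hv, rfl⟩
            rw [smul_tmul']
            exact Submodule.subset_span ⟨z • z', v, hv, rfl⟩
          · show z • (0 : ℂ ⊗[ℚ] V) ∈ T
            rw [smul_zero]; exact T.zero_mem
          · intro a b _ _ ha hb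
            show z • (a + b) ∈ T
            rw [smul_add]; exact T.add_mem ha hb
          · intro q a _ ha
            show z • (q • a) ∈ T
            rw [smul_comm]; exact T.smul_mem q ha }
    have hbc : L.baseChange ℂ ≤ T' := by
      rw [Submodule.baseChange_eq_span]
      refine Submodule.span_le.mpr ?_
      rintro - ⟨v, hv, rfl⟩
      exact Submodule.subset_span ⟨1, v, hv, rfl⟩
    have hwT : w ∈ T := hbc hw
    intro j
    refine Submodule.span_induction (p := fun x _ => coordMapAux c j x ∈ L) ?_ ?_ ?_ ?_ hwT
    · rintro x ⟨z, v, hv, rfl⟩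
      rw [coordMapAux_tmul]
      exact L.smul_mem _ hv
    · show coordMapAux c j 0 ∈ L
      rw [map_zero]; exact L.zero_mem
    · intro a b _ _ ha hb
      show coordMapAux c j (a + b) ∈ L
      rw [map_add]; exact L.add_mem ha hb
    · intro q a _ ha
      show coordMapAux c j (q • a) ∈ L
      rw [map_smul]; exact L.smul_mem q ha
  · intro h
    have hw : w = ((decompAux c) w).sum fun j v => (c j : ℂ) ⊗ₜ[ℚ] v := by
      conv_lhs => rw [← (decompAux (V := V) c).symm_apply_apply w]
      conv_lhs => rw [← Finsupp.sum_single ((decompAux c) w)]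
      rw [map_finsuppSum]
      exact Finsupp.sum_congr fun j _ => decompAux_symm_single c j _
    rw [hw]
    refine Submodule.sum_mem _ fun j _ => ?_
    refine Submodule.tmul_mem_baseChange_of_mem _ ?_
    rw [decompAux_apply]
    exact h j

lemma rationalEnvelope_le_aux {w : ℂ ⊗[ℚ] V} {L : Submodule ℚ V}
    (h : w ∈ L.baseChange ℂ) : rationalEnvelope V w ≤ L := sInf_le h

lemma mem_baseChange_rationalEnvelope (w : ℂ ⊗[ℚ] V) :
    w ∈ (rationalEnvelope V w).baseChange ℂ := by
  classical
  let c := Module.Basis.ofVectorSpace ℚ ℂ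
  rw [mem_baseChange_iff_aux c]
  intro j
  exact Submodule.mem_sInf.2 fun L hL => (mem_baseChange_iff_aux c).1 hL j

lemma countable_submodule_aux (V : Type*) [AddCommGroup V] [Module ℚ V]
    [FiniteDimensional ℚ V] : Countable (Submodule ℚ V) := by
  haveI : Countable V :=
    Countable.of_equiv _ (Module.finBasis ℚ V).repr.toEquiv.symm
  have hsurj : Function.Surjective
      (fun s : Finset V => Submodule.span ℚ (s : Set V)) := by
    intro L
    obtain ⟨s, hs⟩ := (IsNoetherian.noetherian L : L.FG)
    exact ⟨s, hs⟩
  exact hsurj.countable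

end Aux

/-- For a `ℂ`-subspace `W` of the complexification `V_ℂ` of a finite-dimensional
`ℚ`-vector space `V`, the set of `w ∈ W` whose rational envelope `L(w)` is strictly
smaller than `L(W)` is covered by a countable family of proper `ℂ`-subspaces of `W`;
in particular some `w ∈ W` satisfies `L(w) = L(W)`. -/
theorem rationalEnvelope_generic (V : Type*) [AddCommGroup V] [Module ℚ V]
    [FiniteDimensional ℚ V] (W : Submodule ℂ (ℂ ⊗[ℚ] V)) :
    (∃ (ι : Type) (_ : Countable ι) (Wi : ι → Submodule ℂ (ℂ ⊗[ℚ] V)),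
        (∀ i, Wi i ≤ W ∧ Wi i ≠ W) ∧
        {w ∈ (W : Set (ℂ ⊗[ℚ] V)) |
            rationalEnvelope V w ≠ rationalEnvelopeSet V (W : Set (ℂ ⊗[ℚ] V))} ⊆
          ⋃ i, (Wi i : Set (ℂ ⊗[ℚ] V))) ∧
    ∃ w ∈ W, rationalEnvelope V w = rationalEnvelopeSet V (W : Set (ℂ ⊗[ℚ] V)) := by
  classical
  haveI : Countable (Submodule ℚ V) := countable_submodule_aux V
  haveI : Uncountable ℂ := Complex.ofReal_injective.uncountable
  set E := rationalEnvelopeSet V (W : Set (ℂ ⊗[ℚ] V)) with hE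
  have hle : ∀ w ∈ W, rationalEnvelope V w ≤ E := by
    intro w hw
    exact le_biSup (fun w => rationalEnvelope V w) hw
  have part2 : ∃ w ∈ W, rationalEnvelope V w = E := by
    obtain ⟨m, ⟨w₀, hw₀, hw₀m⟩, hmaxm⟩ :=
      (set_has_maximal_iff_noetherian.mpr (inferInstance : IsNoetherian ℚ V))
        {L | ∃ w ∈ (W : Set (ℂ ⊗[ℚ] V)), rationalEnvelope V w = L}
        ⟨rationalEnvelope V 0, 0, W.zero_mem, rfl⟩
    refine ⟨w₀, hw₀, le_antisymm (hle w₀ hw₀) ?_⟩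
    rw [hE, rationalEnvelopeSet]
    refine iSup₂_le fun w' hw' => ?_
    have hni : ¬ Function.Injective fun z : ℂ => rationalEnvelope V (w₀ + z • w') :=
      not_injective_uncountable_countable _
    obtain ⟨z, z', hzz, hne⟩ := Function.not_injective_iff.1 hni
    set L := rationalEnvelope V (w₀ + z • w') with hL
    have h1 : w₀ + z • w' ∈ L.baseChange ℂ := mem_baseChange_rationalEnvelope _
    have h2 : w₀ + z' • w' ∈ L.baseChange ℂ := by
      rw [hL]
      have hz : rationalEnvelope V (w₀ + z • w') = rationalEnvelope V (w₀ + z' • w') := hzz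
      rw [hz]
      exact mem_baseChange_rationalEnvelope _
    have hsub : (z - z') • w' ∈ L.baseChange ℂ := by
      have h3 := Submodule.sub_mem _ h1 h2
      have he : (w₀ + z • w') - (w₀ + z' • w') = (z - z') • w' := by
        rw [sub_smul]; abel
      rwa [he] at h3
    have hw'm : w' ∈ L.baseChange ℂ := by
      have h4 := Submodule.smul_mem _ (z - z')⁻¹ hsub
      rwa [smul_smul, inv_mul_cancel₀ (sub_ne_zero.2 hne), one_smul] at h4
    have hw0m : w₀ ∈ L.baseChange ℂ := by
      have h5 := Submodule.sub_mem _ h1 (Submodule.smul_mem _ z hw'm)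
      simpa using h5
    have hmL : m ≤ L := by
      rw [← hw₀m]; exact rationalEnvelope_le_aux hw0m
    have hLm : L = m := by
      by_contra hne2
      exact hmaxm L ⟨w₀ + z • w', W.add_mem hw₀ (W.smul_mem z hw'), rfl⟩
        (lt_of_le_of_ne hmL (Ne.symm hne2))
    calc rationalEnvelope V w' ≤ L := rationalEnvelope_le_aux hw'm
      _ = m := hLm
      _ = rationalEnvelope V w₀ := hw₀m.symm
  refine ⟨?_, part2⟩
  by_cases hex : ∃ L : Submodule ℚ V, ¬ E ≤ L
  · haveI : Nonempty {L : Submodule ℚ V // ¬ E ≤ L} := ⟨⟨hex.choose, hex.choose_spec⟩⟩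
    obtain ⟨f, hf⟩ := exists_surjective_nat {L : Submodule ℚ V // ¬ E ≤ L}
    refine ⟨ℕ, inferInstance, fun n => W ⊓ ((f n).1.baseChange ℂ), fun n => ⟨inf_le_left, ?_⟩, ?_⟩
    · intro hEq
      refine (f n).2 ?_
      have hWle : W ≤ (f n).1.baseChange ℂ := inf_eq_left.mp hEq
      exact iSup₂_le fun w hw => rationalEnvelope_le_aux (hWle hw)
    · rintro w ⟨hwW, hwne⟩
      have h1 : ¬ E ≤ rationalEnvelope V w := fun h => hwne (le_antisymm (hle w hwW) h)
      obtain ⟨n, hn⟩ := hf ⟨rationalEnvelope V w, h1⟩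
      refine Set.mem_iUnion.2 ⟨n, ?_⟩
      show w ∈ W ⊓ ((f n).1.baseChange ℂ)
      refine Submodule.mem_inf.2 ⟨hwW, ?_⟩
      rw [hn]
      exact mem_baseChange_rationalEnvelope w
  · refine ⟨Empty, inferInstance, Empty.elim, fun i => i.elim, ?_⟩
    rintro w ⟨hwW, hwne⟩
    push_neg at hex
    exact (hwne (le_antisymm (hle w hwW) (hex _))).elim
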